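/- Let B = (d_{ij}) be an n×p matrix with nonnegative entries, let λ_f ≥ 0 and λ_w > 0 with d_{·j} + λ_f > 0 for all j, and set E_λ = D_{w,λ}^{-1/2} B D_{f,λ}^{-1/2} and L_{w,λ} = I_n − E_λE_λ^⊤. Then the smallest eigenvalue of L_{w,λ} satisfies eigmin(L_{w,λ}) ≥ λ_w / (max_i d_{i·} + λ_w) > 0, and consequently ‖E_λ‖ ≤ √( max_i d_{i·} / (max_i d_{i·} + λ_w) ) < 1. -/

import Mathlib

open Matrix BigOperators

/-- Spectral (ℓ2 operator) norm of a real matrix. -/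
noncomputable def specNorm {m n : ℕ} (A : Matrix (Fin m) (Fin n) ℝ) : ℝ :=
  ‖LinearMap.toContinuousLinearMap (Matrix.toEuclideanLin A)‖

/-- with `λ_w > 0`, the smallest eigenvalue of the regularized worker
Laplacian `L_{w,λ} = I − E_λE_λ^⊤` is at least `λ_w/(max_i d_{i·} + λ_w) > 0`, and
`‖E_λ‖ ≤ √(max_i d_{i·}/(max_i d_{i·} + λ_w)) < 1`. -/
lemma cs_aux {n p : ℕ} (B : Matrix (Fin n) (Fin p) ℝ) (hB : ∀ i j, 0 ≤ B i j)
    (a : Fin n → ℝ) (b : Fin p → ℝ) (ha : ∀ i, 0 < a i) (hb : ∀ j, 0 < b j)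
    (c1 c2 : ℝ) (hc1 : 0 ≤ c1)
    (h1 : ∀ i, (∑ j, B i j) ≤ c1 * a i) (h2 : ∀ j, (∑ i, B i j) ≤ c2 * b j)
    (y : Fin p → ℝ) :
    ∑ i, (∑ j, B i j / (Real.sqrt (a i) * Real.sqrt (b j)) * y j) ^ 2
      ≤ c1 * c2 * ∑ j, (y j) ^ 2 := by
  have key : ∀ i, (∑ j, B i j / (Real.sqrt (a i) * Real.sqrt (b j)) * y j) ^ 2
      ≤ (1 / a i) * ((∑ j, B i j) * ∑ j, B i j * (y j) ^ 2 / b j) := by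
    intro i
    have e1 : ∑ j, B i j / (Real.sqrt (a i) * Real.sqrt (b j)) * y j
        = (1 / Real.sqrt (a i)) * ∑ j, (Real.sqrt (B i j) * (Real.sqrt (B i j) * y j / Real.sqrt (b j))) := by
      rw [Finset.mul_sum]; apply Finset.sum_congr rfl; intro j _
      have m : Real.sqrt (B i j) * Real.sqrt (B i j) = B i j := Real.mul_self_sqrt (hB i j)
      have hsaj : Real.sqrt (a i) ≠ 0 := (Real.sqrt_pos.2 (ha i)).ne'
      have hsbj : Real.sqrt (b j) ≠ 0 := (Real.sqrt_pos.2 (hb j)).ne'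
      field_simp
      linear_combination (-(y j)) * m
    rw [e1, mul_pow]
    have h1a : (1 / Real.sqrt (a i)) ^ 2 = 1 / a i := by
      rw [div_pow, one_pow, Real.sq_sqrt (ha i).le]
    rw [h1a]
    have cs := Finset.sum_mul_sq_le_sq_mul_sq Finset.univ
      (fun j => Real.sqrt (B i j)) (fun j => Real.sqrt (B i j) * y j / Real.sqrt (b j))
    have e2 : ∀ j, Real.sqrt (B i j) ^ 2 = B i j := fun j => Real.sq_sqrt (hB i j)
    have e3 : ∀ j : Fin p, (Real.sqrt (B i j) * y j / Real.sqrt (b j)) ^ 2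
        = B i j * (y j) ^ 2 / b j := by
      intro j
      rw [div_pow, mul_pow, Real.sq_sqrt (hB i j), Real.sq_sqrt (hb j).le]
    simp only [e2, e3] at cs
    exact mul_le_mul_of_nonneg_left cs (one_div_nonneg.mpr (ha i).le)
  calc ∑ i, (∑ j, B i j / (Real.sqrt (a i) * Real.sqrt (b j)) * y j) ^ 2
      ≤ ∑ i, (1 / a i) * ((∑ j, B i j) * ∑ j, B i j * (y j) ^ 2 / b j) :=
        Finset.sum_le_sum (fun i _ => key i)
    _ ≤ ∑ i, c1 * ∑ j, B i j * (y j) ^ 2 / b j := by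
        apply Finset.sum_le_sum; intro i _
        rw [← mul_assoc]
        apply mul_le_mul_of_nonneg_right
        · rw [div_mul_eq_mul_div, one_mul, div_le_iff₀ (ha i)]
          exact h1 i
        · apply Finset.sum_nonneg; intro j _
          exact div_nonneg (mul_nonneg (hB i j) (sq_nonneg _)) (hb j).le
    _ = c1 * ∑ j, (∑ i, B i j) * ((y j) ^ 2 / b j) := by
        rw [← Finset.mul_sum, Finset.sum_comm]
        congr 1; apply Finset.sum_congr rfl; intro j _
        rw [Finset.sum_mul]; apply Finset.sum_congr rfl; intro i _; ring
    _ ≤ c1 * ∑ j, (c2 * b j) * ((y j) ^ 2 / b j) := by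
        apply mul_le_mul_of_nonneg_left _ hc1
        apply Finset.sum_le_sum; intro j _
        exact mul_le_mul_of_nonneg_right (h2 j) (div_nonneg (sq_nonneg _) (hb j).le)
    _ = c1 * c2 * ∑ j, (y j) ^ 2 := by
        rw [mul_assoc]; congr 1; rw [Finset.mul_sum]
        apply Finset.sum_congr rfl; intro j _
        have hbj := (hb j).ne'
        field_simp

theorem stmt_3 (n p : ℕ) (hn : 0 < n) (hp : 0 < p)
    (B : Matrix (Fin n) (Fin p) ℝ) (hB : ∀ i j, 0 ≤ B i j)
    (lamw lamf : ℝ) (hlamf : 0 ≤ lamf) (hlamw : 0 < lamw)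
    (drow : Fin n → ℝ) (hdrow : ∀ i, drow i = ∑ j, B i j)
    (dcol : Fin p → ℝ) (hdcol : ∀ j, dcol j = ∑ i, B i j)
    (hcolpos : ∀ j, 0 < dcol j + lamf)
    (Elam : Matrix (Fin n) (Fin p) ℝ)
    (hElam : Elam = Matrix.diagonal (fun i => 1 / Real.sqrt (drow i + lamw)) * B *
      Matrix.diagonal (fun j => 1 / Real.sqrt (dcol j + lamf)))
    (Lwl : Matrix (Fin n) (Fin n) ℝ) (hLwl : Lwl = 1 - Elam * Elamᵀ)
    (maxd : ℝ) (hmaxd : maxd = Finset.univ.sup' ⟨⟨0, hn⟩, Finset.mem_univ _⟩ drow) :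
    (∀ (μ : ℝ) (x : Fin n → ℝ), x ≠ 0 → Lwl.mulVec x = μ • x →
      lamw / (maxd + lamw) ≤ μ) ∧
    0 < lamw / (maxd + lamw) ∧
    specNorm Elam ≤ Real.sqrt (maxd / (maxd + lamw)) ∧
    Real.sqrt (maxd / (maxd + lamw)) < 1 := by
  have hd0 : ∀ i, 0 ≤ drow i := fun i => by
    rw [hdrow]; exact Finset.sum_nonneg fun j _ => hB i j
  have hrowpos : ∀ i, 0 < drow i + lamw := fun i => by have := hd0 i; linarith
  have hmax : ∀ i, drow i ≤ maxd := fun i => by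
    rw [hmaxd]; exact Finset.le_sup' drow (Finset.mem_univ i)
  have hmax0 : 0 ≤ maxd := le_trans (hd0 ⟨0, hn⟩) (hmax ⟨0, hn⟩)
  have hden : 0 < maxd + lamw := by linarith
  set c := maxd / (maxd + lamw) with hc
  have hc0 : 0 ≤ c := div_nonneg hmax0 hden.le
  have hc1 : c < 1 := (div_lt_one hden).2 (by linarith)
  have hEentry : ∀ i j, Elam i j
      = B i j / (Real.sqrt (drow i + lamw) * Real.sqrt (dcol j + lamf)) := by
    intro i j
    rw [hElam, Matrix.mul_diagonal, Matrix.diagonal_mul]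
    ring
  -- bound on ‖Elam y‖²
  have keyE : ∀ y : Fin p → ℝ,
      ∑ i, (∑ j, Elam i j * y j) ^ 2 ≤ c * ∑ j, (y j) ^ 2 := by
    intro y
    have h1 : ∀ i, (∑ j, B i j) ≤ c * (drow i + lamw) := by
      intro i
      rw [← hdrow, hc, div_mul_eq_mul_div, le_div_iff₀ hden]
      nlinarith [hmax i, hlamw.le, hd0 i]
    have h2 : ∀ j, (∑ i, B i j) ≤ 1 * (dcol j + lamf) := by
      intro j; rw [← hdcol, one_mul]; linarith
    have := cs_aux B hB (fun i => drow i + lamw) (fun j => dcol j + lamf)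
      hrowpos hcolpos c 1 hc0 h1 h2 y
    rw [mul_one] at this
    calc ∑ i, (∑ j, Elam i j * y j) ^ 2
        = ∑ i, (∑ j, B i j / (Real.sqrt (drow i + lamw) * Real.sqrt (dcol j + lamf)) * y j) ^ 2 := by
          apply Finset.sum_congr rfl; intro i _
          congr 1; apply Finset.sum_congr rfl; intro j _
          rw [hEentry]
      _ ≤ c * ∑ j, (y j) ^ 2 := this
  -- bound on ‖Elamᵀ x‖²
  have keyEt : ∀ x : Fin n → ℝ,
      ∑ j, (∑ i, Elam i j * x i) ^ 2 ≤ c * ∑ i, (x i) ^ 2 := by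
    intro x
    have h1 : ∀ j, (∑ i, Bᵀ j i) ≤ 1 * (dcol j + lamf) := by
      intro j
      have : ∑ i, Bᵀ j i = ∑ i, B i j := rfl
      rw [this, ← hdcol, one_mul]; linarith
    have h2 : ∀ i, (∑ j, Bᵀ j i) ≤ c * (drow i + lamw) := by
      intro i
      have e : ∑ j, Bᵀ j i = ∑ j, B i j := rfl
      rw [e, ← hdrow, hc, div_mul_eq_mul_div, le_div_iff₀ hden]
      nlinarith [hmax i, hlamw.le, hd0 i]
    have := cs_aux Bᵀ (fun j i => hB i j) (fun j => dcol j + lamf) (fun i => drow i + lamw)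
      hcolpos hrowpos 1 c zero_le_one h1 h2 x
    rw [one_mul] at this
    calc ∑ j, (∑ i, Elam i j * x i) ^ 2
        = ∑ j, (∑ i, Bᵀ j i / (Real.sqrt (dcol j + lamf) * Real.sqrt (drow i + lamw)) * x i) ^ 2 := by
          apply Finset.sum_congr rfl; intro j _
          congr 1; apply Finset.sum_congr rfl; intro i _
          rw [hEentry, Matrix.transpose_apply, mul_comm (Real.sqrt (dcol j + lamf))]
      _ ≤ c * ∑ i, (x i) ^ 2 := this
  refine ⟨?_, div_pos hlamw hden, ?_, ?_⟩
  · intro μ x hx hxe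
    have hM : (Elam * Elamᵀ) *ᵥ x = x - μ • x := by
      rw [hLwl, Matrix.sub_mulVec, Matrix.one_mulVec] at hxe
      funext i
      have := congrFun hxe i
      simp only [Pi.sub_apply, Pi.smul_apply, smul_eq_mul] at this ⊢
      linarith
    have hdot : ∑ j, (∑ i, Elam i j * x i) ^ 2 = (1 - μ) * ∑ i, (x i) ^ 2 := by
      have h1 : x ⬝ᵥ ((Elam * Elamᵀ) *ᵥ x) = x ⬝ᵥ (x - μ • x) := by rw [hM]
      rw [← Matrix.mulVec_mulVec, Matrix.dotProduct_mulVec, ← Matrix.mulVec_transpose] at h1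
      calc ∑ j, (∑ i, Elam i j * x i) ^ 2
          = (Elamᵀ *ᵥ x) ⬝ᵥ (Elamᵀ *ᵥ x) := by
            simp only [dotProduct, Matrix.mulVec, Matrix.transpose_apply, sq]
        _ = x ⬝ᵥ (x - μ • x) := h1
        _ = (1 - μ) * ∑ i, (x i) ^ 2 := by
            simp only [dotProduct, Pi.sub_apply, Pi.smul_apply, smul_eq_mul,
              Finset.mul_sum]
            apply Finset.sum_congr rfl; intro i _; ring
    have hx2 : 0 < ∑ i, (x i) ^ 2 := by
      have hex : ∃ i, x i ≠ 0 := by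
        by_contra h; push_neg at h; exact hx (funext h)
      obtain ⟨i0, hi0⟩ := hex
      exact Finset.sum_pos' (fun i _ => sq_nonneg _)
        ⟨i0, Finset.mem_univ _, by positivity⟩
    have hle : (1 - μ) * ∑ i, (x i) ^ 2 ≤ c * ∑ i, (x i) ^ 2 := by
      rw [← hdot]; exact keyEt x
    have h1μ : 1 - μ ≤ c := by
      by_contra h
      push_neg at h
      have := mul_lt_mul_of_pos_right h hx2
      linarith
    have heq : lamw / (maxd + lamw) = 1 - c := by
      rw [hc]; field_simp; ring
    rw [heq]; linarith
  · rw [specNorm]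
    apply ContinuousLinearMap.opNorm_le_bound _ (Real.sqrt_nonneg _)
    intro y
    rw [LinearMap.coe_toContinuousLinearMap']
    rw [Matrix.toEuclideanLin_apply]
    rw [EuclideanSpace.norm_eq, EuclideanSpace.norm_eq]
    rw [← Real.sqrt_mul hc0 (∑ j, ‖y j‖ ^ 2)]
    apply Real.sqrt_le_sqrt
    have := keyE (fun j => (WithLp.equiv 2 (Fin p → ℝ)) y j)
    calc ∑ i, ‖(WithLp.equiv 2 (Fin n → ℝ)).symm (Elam *ᵥ (WithLp.equiv 2 (Fin p → ℝ)) y) i‖ ^ 2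
        = ∑ i, (∑ j, Elam i j * (WithLp.equiv 2 (Fin p → ℝ)) y j) ^ 2 := by
          apply Finset.sum_congr rfl; intro i _
          rw [Real.norm_eq_abs, sq_abs]
          rfl
      _ ≤ c * ∑ j, ((WithLp.equiv 2 (Fin p → ℝ)) y j) ^ 2 := this
      _ = c * ∑ j, ‖y j‖ ^ 2 := by
          congr 1; apply Finset.sum_congr rfl; intro j _
          rw [Real.norm_eq_abs, sq_abs]; rfl
  · rw [show (1 : ℝ) = Real.sqrt 1 by simp]
    exact Real.sqrt_lt_sqrt hc0 (by simpa using hc1)
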